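/- arXiv:0810.1509 — 3 statements merged into one kernel-verified Lean document; each statement's English description precedes it below -/
import Mathlib

section
/- In a fully residually free group G, any two elements g and h either commute or generate a free subgroup of rank 2, i.e. the subgroup ⟨g,h⟩ of G is free of rank 2. -/
open Function

namespace RFAux

/-- The "reduced" condition on a word: no two adjacent letters are inverse to each other. -/
def Nice (M : List (Fin 2 × Bool)) : Prop :=
  ∀ (k : ℕ) (hk : k + 1 < M.length) (x : Fin 2) (s : Bool),
    M.get ⟨k, Nat.lt_of_succ_lt hk⟩ = (x, s) → M.get ⟨k + 1, hk⟩ ≠ (x, !s)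

def Pos (M : List (Fin 2 × Bool)) (x : Fin 2) (k : ℕ) : Prop :=
  ∃ h : k < M.length, M.get ⟨k, h⟩ = (x, true)

def Neg (M : List (Fin 2 × Bool)) (x : Fin 2) (k : ℕ) : Prop :=
  ∃ h : k < M.length, M.get ⟨k, h⟩ = (x, false)

theorem no_pos_neg {M : List (Fin 2 × Bool)} (hM : Nice M) {x : Fin 2} {k : ℕ}
    (h1 : Pos M x k) (h2 : Neg M x (k + 1)) : False := by
  obtain ⟨hk1, e1⟩ := h1
  obtain ⟨hk2, e2⟩ := h2
  exact hM k hk2 x true e1 (by simpa using e2)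

theorem no_neg_pos {M : List (Fin 2 × Bool)} (hM : Nice M) {x : Fin 2} {k : ℕ}
    (h1 : Neg M x k) (h2 : Pos M x (k + 1)) : False := by
  obtain ⟨hk1, e1⟩ := h1
  obtain ⟨hk2, e2⟩ := h2
  exact hM k hk2 x false e1 (by simpa using e2)

def P (M : List (Fin 2 × Bool)) (x : Fin 2) (j : Fin (M.length + 1)) : Prop :=
  Pos M x j.val ∨ (0 < j.val ∧ Neg M x (j.val - 1))

def Q (M : List (Fin 2 × Bool)) (x : Fin 2) (j : Fin (M.length + 1)) : Prop :=
  (0 < j.val ∧ Pos M x (j.val - 1)) ∨ Neg M x j.val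

open scoped Classical in
noncomputable def e (M : List (Fin 2 × Bool)) (hM : Nice M) (x : Fin 2) :
    {j : Fin (M.length + 1) // P M x j} ≃ {j : Fin (M.length + 1) // Q M x j} where
  toFun := fun jh =>
    if h : Pos M x jh.val.val then
      ⟨⟨jh.val.val + 1, by obtain ⟨h1, _⟩ := h; omega⟩,
        Or.inl ⟨Nat.succ_pos _, by simpa using h⟩⟩
    else
      ⟨⟨jh.val.val - 1, by have := jh.val.isLt; omega⟩,
        Or.inr (by
          obtain ⟨h0, hneg⟩ := jh.prop.resolve_left h
          simpa using hneg)⟩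
  invFun := fun vh =>
    if h : 0 < vh.val.val ∧ Pos M x (vh.val.val - 1) then
      ⟨⟨vh.val.val - 1, by have := vh.val.isLt; omega⟩, Or.inl h.2⟩
    else
      ⟨⟨vh.val.val + 1, by
          obtain ⟨hvl, _⟩ := vh.prop.resolve_left h
          omega⟩,
        Or.inr ⟨Nat.succ_pos _, by simpa using vh.prop.resolve_left h⟩⟩
  left_inv := by
    rintro ⟨j, hj⟩
    dsimp only
    by_cases h : Pos M x j.val
    · rw [dif_pos h, dif_pos (show 0 < (j.val+1:ℕ) ∧ Pos M x (j.val+1-1) by simpa using h)]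
      apply Subtype.ext; apply Fin.ext; simp
    · rw [dif_neg h]
      obtain ⟨h0, hneg⟩ := hj.resolve_left h
      have hnot : ¬ (0 < j.val - 1 ∧ Pos M x (j.val - 1 - 1)) := by
        rintro ⟨h1, h2⟩
        have h2' : Pos M x (j.val - 2) := by
          have e12 : j.val - 1 - 1 = j.val - 2 := by omega
          rw [e12] at h2; exact h2
        have : Neg M x (j.val - 2 + 1) := by
          have : j.val - 2 + 1 = j.val - 1 := by omega
          rw [this]; exact hneg
        exact no_pos_neg hM h2' this
      rw [dif_neg (by simpa using hnot)]
      apply Subtype.ext; apply Fin.ext; simp only []; omega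
  right_inv := by
    rintro ⟨v, hv⟩
    dsimp only
    by_cases h : 0 < v.val ∧ Pos M x (v.val - 1)
    · rw [dif_pos h]
      rw [dif_pos (by simpa using h.2)]
      apply Subtype.ext; apply Fin.ext; simp; omega
    · rw [dif_neg h]
      have hneg : Neg M x v.val := hv.resolve_left h
      have hnot : ¬ Pos M x (v.val + 1) := fun hp => no_neg_pos hM hneg hp
      rw [dif_neg (by simpa using hnot)]
      apply Subtype.ext; apply Fin.ext; simp

open scoped Classical in
noncomputable def cEquiv (M : List (Fin 2 × Bool)) (hM : Nice M) (x : Fin 2) :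
    {j : Fin (M.length + 1) // ¬ P M x j} ≃ {j : Fin (M.length + 1) // ¬ Q M x j} :=
  Fintype.equivOfCardEq (by
    rw [Fintype.card_subtype_compl, Fintype.card_subtype_compl,
      Fintype.card_congr (e M hM x)])

open scoped Classical in
noncomputable def perm (M : List (Fin 2 × Bool)) (hM : Nice M) (x : Fin 2) :
    Equiv.Perm (Fin (M.length + 1)) :=
  ((Equiv.sumCompl (P M x)).symm.trans
    (Equiv.sumCongr (e M hM x) (cEquiv M hM x))).trans (Equiv.sumCompl (Q M x))

open scoped Classical in
theorem perm_apply_of_P {M : List (Fin 2 × Bool)} (hM : Nice M) (x : Fin 2)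
    (j : Fin (M.length + 1)) (hj : P M x j) :
    perm M hM x j = ((e M hM x ⟨j, hj⟩ : {j // Q M x j}) : Fin (M.length + 1)) := by
  simp only [perm, Equiv.trans_apply]
  rw [Equiv.sumCompl_symm_apply_of_pos hj]
  simp

theorem perm_apply_pos {M : List (Fin 2 × Bool)} (hM : Nice M) {x : Fin 2} {k : ℕ}
    (hk : k < M.length) (hx : M.get ⟨k, hk⟩ = (x, true)) :
    perm M hM x ⟨k, by omega⟩ = ⟨k + 1, by omega⟩ := by
  classical
  have hpos : Pos M x k := ⟨hk, hx⟩
  have hP : P M x ⟨k, by omega⟩ := Or.inl hpos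
  rw [perm_apply_of_P hM x _ hP]
  show (((e M hM x) ⟨⟨k, _⟩, hP⟩ : {j // Q M x j}) : Fin (M.length + 1)) = _
  simp only [e, Equiv.coe_fn_mk]
  rw [dif_pos (by simpa using hpos)]

theorem perm_apply_neg {M : List (Fin 2 × Bool)} (hM : Nice M) {x : Fin 2} {k : ℕ}
    (hk : k < M.length) (hx : M.get ⟨k, hk⟩ = (x, false)) :
    perm M hM x ⟨k + 1, by omega⟩ = ⟨k, by omega⟩ := by
  classical
  have hneg : Neg M x k := ⟨hk, hx⟩
  have hP : P M x ⟨k + 1, by omega⟩ := Or.inr ⟨Nat.succ_pos _, by simpa using hneg⟩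
  rw [perm_apply_of_P hM x _ hP]
  show (((e M hM x) ⟨⟨k + 1, _⟩, hP⟩ : {j // Q M x j}) : Fin (M.length + 1)) = _
  simp only [e, Equiv.coe_fn_mk]
  have hnot : ¬ Pos M x (k + 1) := fun hp => no_neg_pos hM hneg hp
  rw [dif_neg (by simpa using hnot)]
  apply Fin.ext; simp

theorem nice_of_reduce {L : List (Fin 2 × Bool)} (h : FreeGroup.reduce L = L) : Nice L := by
  intro k hk x s h1 h2
  have e1 : L[k]'(by omega) = (x, s) := h1
  have e2 : L[k + 1]'hk = (x, !s) := h2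
  have hdec : L = L.take k ++ (x, s) :: (x, !s) :: L.drop (k + 2) := by
    conv_lhs => rw [← List.take_append_drop k L]
    congr 1
    rw [List.drop_eq_getElem_cons (show k < L.length by omega), e1,
      List.drop_eq_getElem_cons (show k + 1 < L.length from hk), e2]
  exact FreeGroup.reduce.not (h.trans hdec)

theorem nice_reverse {L : List (Fin 2 × Bool)} (h : Nice L) : Nice L.reverse := by
  intro k hk x s h1 h2
  rw [List.length_reverse] at hk
  have e1 : L[L.length - 1 - k]'(by omega) = (x, s) := by
    rw [List.get_eq_getElem, List.getElem_reverse] at h1; exact h1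
  have e2 : L[L.length - 1 - (k + 1)]'(by omega) = (x, !s) := by
    rw [List.get_eq_getElem, List.getElem_reverse] at h2; exact h2
  have idx : L.length - 1 - (k + 1) = L.length - 2 - k := by omega
  simp only [idx] at e2
  refine h (L.length - 2 - k) (by omega) x (!s) e2 ?_
  show L[L.length - 2 - k + 1]'(by omega) = (x, !(!s))
  have idx2 : L.length - 2 - k + 1 = L.length - 1 - k := by omega
  simp only [idx2, e1, Bool.not_not]

open scoped Classical in
theorem prod_drop_apply (M : List (Fin 2 × Bool)) (hM : Nice M) :
    ∀ (d t : ℕ), t ≤ M.length → M.length - t = d →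
      (((M.reverse.drop t).map fun g => cond g.2 (perm M hM g.1) (perm M hM g.1)⁻¹).prod)
          ⟨0, by omega⟩ = ⟨M.length - t, by omega⟩ := by
  intro d
  induction d with
  | zero =>
    intro t ht hd
    have hteq : t = M.length := by omega
    rw [List.drop_eq_nil_of_le (by rw [List.length_reverse]; omega)]
    simp only [List.map_nil, List.prod_nil, Equiv.Perm.coe_one, id_eq]
    apply Fin.ext; simp; omega
  | succ d ih =>
    intro t ht hd
    have htlt : t < M.length := by omega
    have htr : t < M.reverse.length := by rw [List.length_reverse]; omega
    rw [List.drop_eq_getElem_cons htr, List.map_cons, List.prod_cons, Equiv.Perm.mul_apply,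
      ih (t + 1) (by omega) (by omega)]
    have hrev : M.reverse[t]'htr = M[M.length - 1 - t]'(by omega) := List.getElem_reverse _
    set k : ℕ := M.length - 1 - t with hk
    have hklt : k < M.length := by omega
    rcases hxs : M[k]'hklt with ⟨x, s⟩
    rw [hrev, hxs]
    have hget : M.get ⟨k, hklt⟩ = (x, s) := hxs
    have idx3 : M.length - (t + 1) = k := by omega
    have idx4 : k + 1 = M.length - t := by omega
    cases s with
    | true =>
      have hp := perm_apply_pos hM hklt hget
      have i1 : (⟨M.length - (t + 1), by omega⟩ : Fin (M.length + 1))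
          = ⟨k, by omega⟩ := by apply Fin.ext; simp [idx3]
      rw [i1]
      simp only [cond_true]
      rw [hp]
      apply Fin.ext; simp [idx4]
    | false =>
      have hp := perm_apply_neg hM hklt hget
      have i1 : (⟨M.length - (t + 1), by omega⟩ : Fin (M.length + 1))
          = ⟨k, by omega⟩ := by apply Fin.ext; simp [idx3]
      rw [i1]
      simp only [cond_false]
      have i2 : (⟨M.length - t, by omega⟩ : Fin (M.length + 1))
          = ⟨k + 1, by omega⟩ := by apply Fin.ext; simp [← idx4]
      rw [i2]
      have hcg := congrArg (fun z => (perm M hM x)⁻¹ z) hp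
      simpa using hcg.symm

theorem exists_perm_hom (w : FreeGroup (Fin 2)) (hw : w ≠ 1) :
    ∃ (n : ℕ) (f : FreeGroup (Fin 2) →* Equiv.Perm (Fin (n + 1))), f w ≠ 1 := by
  set M : List (Fin 2 × Bool) := w.toWord.reverse with hMdef
  have hM : Nice M := nice_reverse (nice_of_reduce (FreeGroup.reduce_toWord w))
  refine ⟨M.length, FreeGroup.lift (fun x => perm M hM x), ?_⟩
  intro hcon
  have hne : w.toWord ≠ [] := by rwa [ne_eq, FreeGroup.toWord_eq_nil_iff]
  have h0 : M.length ≠ 0 := by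
    rw [hMdef, List.length_reverse]
    simpa using hne
  have hP := prod_drop_apply M hM M.length 0 (Nat.zero_le _) (by omega)
  rw [List.drop_zero] at hP
  have hrev2 : M.reverse = w.toWord := by rw [hMdef, List.reverse_reverse]
  rw [hrev2] at hP
  have hlift : FreeGroup.lift (fun x => perm M hM x) w
      = ((w.toWord.map fun g => cond g.2 (perm M hM g.1) (perm M hM g.1)⁻¹)).prod := by
    conv_lhs => rw [← FreeGroup.mk_toWord (x := w)]
    exact FreeGroup.lift_mk
  rw [hcon] at hlift
  rw [← hlift] at hP
  simp only [Equiv.Perm.coe_one, id_eq] at hP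
  have := (Fin.mk.injEq _ _ _ _).mp hP
  omega

/-- Finitely many homomorphisms from the free group on two generators into a finite group. -/
theorem hom_finite (Q : Type) [Fintype Q] [DecidableEq Q] :
    Finite (FreeGroup (Fin 2) →* Equiv.Perm Q) :=
  Finite.of_equiv (Fin 2 → Equiv.Perm Q) FreeGroup.lift

/-- Free groups of rank two are Hopfian. -/
theorem hopf (θ : FreeGroup (Fin 2) →* FreeGroup (Fin 2)) (hθ : Function.Surjective θ) :
    Function.Injective θ := by
  rw [injective_iff_map_eq_one]
  intro w hw1
  by_contra hw
  obtain ⟨n, f, hf⟩ := exists_perm_hom w hw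
  haveI : Finite (FreeGroup (Fin 2) →* Equiv.Perm (Fin (n + 1))) := hom_finite _
  have hinj : Function.Injective
      (fun σ : FreeGroup (Fin 2) →* Equiv.Perm (Fin (n + 1)) => σ.comp θ) :=
    fun σ τ hστ => (MonoidHom.cancel_right hθ).mp hστ
  obtain ⟨σ, hσ⟩ := Finite.injective_iff_surjective.mp hinj f
  apply hf
  have hσ' : σ.comp θ = f := hσ
  calc f w = σ.comp θ w := by rw [hσ']
  _ = σ (θ w) := rfl
  _ = 1 := by rw [hw1, map_one]

/-- In a free group, two elements that do not commute give an injective homomorphism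
from the free group of rank 2. -/
theorem pair_free {β : Type} (a b : FreeGroup β) (hab : a * b ≠ b * a) :
    Function.Injective (FreeGroup.lift (fun i : Fin 2 => if i = 0 then a else b)) := by
  set fa : Fin 2 → FreeGroup β := fun i => if i = 0 then a else b with hfa
  set ψ : FreeGroup (Fin 2) →* FreeGroup β := FreeGroup.lift fa with hψ
  set H : Subgroup (FreeGroup β) := ψ.range with hH
  have haH : a ∈ H := ⟨FreeGroup.of 0, by simp [hψ, hfa, FreeGroup.lift_apply_of]⟩
  have hbH : b ∈ H := ⟨FreeGroup.of 1, by simp [hψ, hfa, FreeGroup.lift_apply_of]⟩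
  haveI : IsFreeGroup H := inferInstance
  set X := IsFreeGroup.Generators H with hX
  set eH : H ≃* FreeGroup X := IsFreeGroup.toFreeGroup H with heH
  set ρ : FreeGroup (Fin 2) →* H := ψ.rangeRestrict with hρ
  have hρs : Function.Surjective ρ := ψ.rangeRestrict_surjective
  set θ' : FreeGroup (Fin 2) →* FreeGroup X := eH.toMonoidHom.comp ρ with hθ'
  have hθ's : Function.Surjective θ' := eH.surjective.comp hρs
  -- `X` has no three distinct elements
  have h3 : ∀ x y z : X, x = y ∨ x = z ∨ y = z := by
    intro x y z
    by_contra hcon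
    push_neg at hcon
    obtain ⟨hxy, hxz, hyz⟩ := hcon
    set V := Multiplicative (ZMod 2) with hV
    -- injection (Fin 3 → V) into (X → V)
    classical
    have inj1 : Function.Injective (fun (g : Fin 3 → V) =>
        (fun t : X => if t = x then g 0 else if t = y then g 1 else if t = z then g 2 else 1)) := by
      intro g1 g2 hgg
      funext i
      have hx' := congrFun hgg x
      have hy' := congrFun hgg y
      have hz' := congrFun hgg z
      simp only [if_pos rfl, if_neg (Ne.symm hxy), if_neg (Ne.symm hxz),
        if_neg (Ne.symm hyz)] at hx' hy' hz'
      fin_cases i <;> assumption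
    have inj2 : Function.Injective (fun (u : X → V) => FreeGroup.lift u) :=
      FreeGroup.lift.injective
    have inj3 : Function.Injective (fun (χ : FreeGroup X →* V) => χ.comp θ') :=
      fun χ1 χ2 hc => (MonoidHom.cancel_right hθ's).mp hc
    have inj4 : Function.Injective
        (fun (χ : FreeGroup (Fin 2) →* V) => (FreeGroup.lift.symm χ : Fin 2 → V)) :=
      FreeGroup.lift.symm.injective
    have : Function.Injective ((fun (u : Fin 2 → V) => u) ∘
        (fun (χ : FreeGroup (Fin 2) →* V) => (FreeGroup.lift.symm χ : Fin 2 → V)) ∘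
        (fun (χ : FreeGroup X →* V) => χ.comp θ') ∘
        (fun (u : X → V) => FreeGroup.lift u) ∘
        (fun (g : Fin 3 → V) =>
          (fun t : X => if t = x then g 0 else if t = y then g 1 else if t = z then g 2 else 1))) := by
      apply Function.Injective.comp (fun u1 u2 h => h)
      exact ((inj4.comp inj3).comp inj2).comp inj1
    have hcard := Fintype.card_le_of_injective _ this
    simp only [Fintype.card_fun, Fintype.card_fin] at hcard
    have : Fintype.card V = 2 := by simp [hV]
    rw [this] at hcard
    omega
  -- `X` has two distinct elements
  have h2 : ∃ x y : X, x ≠ y := by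
    by_contra hcon
    push_neg at hcon
    -- then FreeGroup X embeds into Multiplicative ℤ, hence is commutative, hence H is commutative
    have habH : (⟨a, haH⟩ : H) * ⟨b, hbH⟩ = ⟨b, hbH⟩ * ⟨a, haH⟩ := by
      by_cases hne : Nonempty X
      · obtain ⟨x0⟩ := hne
        set m : FreeGroup X →* Multiplicative ℤ :=
          FreeGroup.lift (fun _ => Multiplicative.ofAdd 1) with hm
        set sct : Multiplicative ℤ →* FreeGroup X := zpowersHom _ (FreeGroup.of x0) with hs
        have hsm : sct.comp m = MonoidHom.id _ := by
          apply FreeGroup.ext_hom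
          intro u
          have : u = x0 := hcon u x0
          subst this
          simp [hm, hs, FreeGroup.lift_apply_of]
        have hminj : Function.Injective m := by
          intro u v huv
          have := congrArg sct huv
          have h1 : sct (m u) = u := by rw [← MonoidHom.comp_apply, hsm]; rfl
          have h2' : sct (m v) = v := by rw [← MonoidHom.comp_apply, hsm]; rfl
          rw [h1, h2'] at this
          exact this
        apply eH.injective
        apply hminj
        rw [map_mul, map_mul, map_mul, map_mul, mul_comm]
      · -- X empty: FreeGroup X is trivial
        haveI hie : IsEmpty X := not_nonempty_iff.mp hne
        classical
        have htriv : ∀ u : FreeGroup X, u = 1 := by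
          intro u
          rw [← FreeGroup.toWord_eq_nil_iff]
          rcases hlr : u.toWord with _ | ⟨p, rest⟩
          · rfl
          · exact (hie.false p.1).elim
        apply eH.injective
        rw [htriv (eH _), htriv (eH _)]
    have : a * b = b * a := congrArg Subtype.val habH
    exact hab this
  obtain ⟨x, y, hxy⟩ := h2
  classical
  -- X ≃ Fin 2
  have hbij : Function.Bijective (fun t : X => if t = x then (0 : Fin 2) else 1) := by
    constructor
    · intro u v huv
      dsimp only at huv
      by_cases hu : u = x <;> by_cases hv : v = x
      · rw [hu, hv]
      · rw [if_pos hu, if_neg hv] at huv; exact absurd huv (by simp)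
      · rw [if_neg hu, if_pos hv] at huv; exact absurd huv (by simp)
      · rcases h3 x u v with h | h | h
        · exact absurd h.symm hu
        · exact absurd h.symm hv
        · exact h
    · intro i
      fin_cases i
      · exact ⟨x, by simp⟩
      · exact ⟨y, by simp [if_neg (Ne.symm hxy)]⟩
  set eX : X ≃ Fin 2 := Equiv.ofBijective _ hbij with heX
  set θ : FreeGroup (Fin 2) →* FreeGroup (Fin 2) :=
    (FreeGroup.freeGroupCongr eX).toMonoidHom.comp θ' with hθdef
  have hθs : Function.Surjective θ := (FreeGroup.freeGroupCongr eX).surjective.comp hθ's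
  have hθi : Function.Injective θ := hopf θ hθs
  have hρi : Function.Injective ρ := by
    intro u v huv
    apply hθi
    simp only [hθdef, MonoidHom.comp_apply, hθ']
    rw [huv]
  intro u v huv
  apply hρi
  apply Subtype.ext
  rw [MonoidHom.coe_rangeRestrict, MonoidHom.coe_rangeRestrict]
  exact huv

end RFAux

/-- A group `G` is *fully residually free* if for every finite subset `P` of `G` there is a
homomorphism from `G` to a free group whose restriction to `P` is injective. -/
def FullyResiduallyFree (G : Type) [Group G] : Prop :=
  ∀ P : Finset G, ∃ (α : Type) (φ : G →* FreeGroup α), Set.InjOn φ P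

/-- In a fully residually free group, two elements either commute or generate a free
subgroup of rank 2. -/
theorem commute_or_free_of_fullyResiduallyFree (G : Type) [Group G]
    (hG : FullyResiduallyFree G) (g h : G) :
    g * h = h * g ∨ Nonempty (↥(Subgroup.closure {g, h}) ≃* FreeGroup (Fin 2)) := by
  by_cases hc : g * h = h * g
  · exact Or.inl hc
  right
  classical
  obtain ⟨α, φ, hφ⟩ := hG {g * h, h * g}
  set a := φ g with ha
  set b := φ h with hb
  have hab : a * b ≠ b * a := by
    intro hcon
    apply hc
    apply hφ (by simp) (by simp)
    rw [map_mul, map_mul]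
    exact hcon
  set fg : Fin 2 → G := fun i => if i = 0 then g else h with hfg
  set ψ : FreeGroup (Fin 2) →* G := FreeGroup.lift fg with hψ
  have hcomp : φ.comp ψ = FreeGroup.lift (fun i : Fin 2 => if i = 0 then a else b) := by
    apply FreeGroup.ext_hom
    intro i
    simp only [MonoidHom.comp_apply, hψ, hfg, FreeGroup.lift_apply_of]
    by_cases hi : i = 0 <;> simp [hi, ha, hb]
  have hinj : Function.Injective ψ := by
    rw [injective_iff_map_eq_one]
    intro w hw
    have h1 : FreeGroup.lift (fun i : Fin 2 => if i = 0 then a else b) w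
        = FreeGroup.lift (fun i : Fin 2 => if i = 0 then a else b) 1 := by
      rw [← hcomp, MonoidHom.comp_apply, hw, map_one, map_one]
    exact RFAux.pair_free a b hab h1
  have hrangeset : Set.range fg = {g, h} := by
    ext t
    simp only [Set.mem_insert_iff, Set.mem_singleton_iff]
    constructor
    · rintro ⟨i, rfl⟩
      by_cases hi : i = 0
      · left; simp [hfg, hi]
      · right; simp [hfg, hi]
    · rintro (rfl | rfl)
      · exact ⟨0, by simp [hfg]⟩
      · exact ⟨1, by simp [hfg]⟩
  have hrange : ψ.range = Subgroup.closure {g, h} := by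
    rw [hψ, FreeGroup.range_lift_eq_closure, hrangeset]
  exact ⟨(MulEquiv.subgroupCongr hrange.symm).trans (MonoidHom.ofInjective hinj).symm⟩
end

section
/- Every fully residually free group G is CSA: every maximal abelian subgroup A of G is malnormal, i.e. for every g ∈ G with g ∉ A one has gAg⁻¹ ∩ A = {1}. -/
namespace CSAAux

open FreeGroup

variable {α : Type*}

/-- Two adjacent letters do not cancel. -/
def NoCancel (p q : α × Bool) : Prop := ¬(q.1 = p.1 ∧ q.2 = !p.2)

lemma noCancel_of_swap {p q : α × Bool} (h : ¬(p.1 = q.1 ∧ p.2 = !q.2)) : NoCancel p q := by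
  rintro ⟨h1, h2⟩
  exact h ⟨h1.symm, by rw [h2, Bool.not_not]⟩

lemma swap_of_noCancel {p q : α × Bool} (h : NoCancel p q) : ¬(p.1 = q.1 ∧ p.2 = !q.2) := by
  rintro ⟨h1, h2⟩
  exact h ⟨h1.symm, by rw [h2, Bool.not_not]⟩

lemma chain'_reduce [DecidableEq α] (L : List (α × Bool)) :
    List.Chain' NoCancel (reduce L) := by
  induction L with
  | nil => simp; exact List.isChain_nil
  | cons x L ih =>
    rw [reduce.cons]
    rcases h : reduce L with _ | ⟨hd, tl⟩
    · simp; exact List.isChain_singleton x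
    · rw [h] at ih
      by_cases hc : x.1 = hd.1 ∧ x.2 = !hd.2
      · dsimp only
        rw [if_pos hc]
        exact ih.tail
      · dsimp only
        rw [if_neg hc]
        exact ih.cons (fun y hy => by simp at hy; subst hy; exact noCancel_of_swap hc)

lemma chain'_toWord [DecidableEq α] (x : FreeGroup α) :
    List.Chain' NoCancel x.toWord := by
  rw [← reduce_toWord]
  exact chain'_reduce _

lemma reduce_eq_self_of_chain' [DecidableEq α] :
    ∀ {L : List (α × Bool)}, List.Chain' NoCancel L → reduce L = L := by
  intro L
  induction L with
  | nil => simp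
  | cons x L ih =>
    intro h
    rw [reduce.cons, ih h.tail]
    rcases L with _ | ⟨hd, tl⟩
    · rfl
    · dsimp only
      rw [if_neg (swap_of_noCancel (List.isChain_cons_cons.mp h).1)]

lemma chain'_flatten_replicate (W : List (α × Bool)) (hW : List.Chain' NoCancel W)
    (hcyc : ∀ p ∈ W.getLast?, ∀ q ∈ W.head?, NoCancel p q) :
    ∀ k : ℕ, List.Chain' NoCancel (List.replicate k W).flatten := by
  intro k
  induction k with
  | zero => simp; exact List.isChain_nil
  | succ k ih =>
    rw [List.replicate_succ, List.flatten_cons]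
    refine List.isChain_append.mpr ⟨hW, ih, ?_⟩
    intro p hp q hq
    rcases k with _ | k
    · simp at hq
    · have hWne : W ≠ [] := by
        rintro rfl
        simp at hp
      rw [List.replicate_succ, List.flatten_cons, List.head?_append_of_ne_nil _ hWne] at hq
      exact hcyc p hp q hq

lemma pow_eq_mk_flatten (W : List (α × Bool)) :
    ∀ k : ℕ, (mk W) ^ k = mk (List.replicate k W).flatten := by
  intro k
  induction k with
  | zero => simp [one_eq_mk]
  | succ k ih =>
    rw [pow_succ', ih, mul_mk, List.replicate_succ, List.flatten_cons]

lemma conj_head_tail {p : α × Bool} {W : List (α × Bool)} :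
    mk [(p.1, !p.2)] * mk (p :: W) = mk W := by
  rw [mul_mk]
  have : Red.Step ([] ++ (p.1, !p.2) :: (p.1, !(!p.2)) :: W) ([] ++ W) := Red.Step.not
  exact Quot.sound (by simpa using this)

lemma torsionFree_aux [DecidableEq α] :
    ∀ n : ℕ, ∀ x : FreeGroup α, x.toWord.length ≤ n → ∀ k : ℕ, x ^ (k + 1) = 1 → x = 1 := by
  intro n
  induction n with
  | zero =>
    intro x hx k _
    exact toWord_eq_nil_iff.mp (List.eq_nil_of_length_eq_zero (Nat.le_zero.mp hx))
  | succ n ih =>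
    intro x hx k hk
    rcases hW : x.toWord with _ | ⟨p, W'⟩
    · exact toWord_eq_nil_iff.mp hW
    · have hxW : x = mk (p :: W') := by rw [← hW, mk_toWord]
      by_cases hcyc : ∀ q ∈ (x.toWord).getLast?, ∀ r ∈ (x.toWord).head?, NoCancel q r
      · exfalso
        have hch := chain'_flatten_replicate x.toWord (chain'_toWord x) hcyc (k + 1)
        have hpow : x ^ (k + 1) = mk (List.replicate (k + 1) x.toWord).flatten := by
          conv_lhs => rw [← mk_toWord (x := x)]
          exact pow_eq_mk_flatten _ _
        rw [hpow] at hk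
        have h0 : (List.replicate (k + 1) x.toWord).flatten = [] := by
          have := congrArg toWord hk
          rwa [toWord_mk, reduce_eq_self_of_chain' hch, toWord_one] at this
        rw [hW] at h0
        simp [List.replicate_succ] at h0
      · push_neg at hcyc
        obtain ⟨q, hq, r, hr, hnc⟩ := hcyc
        rw [hW] at hq hr
        obtain rfl : p = r := by simpa using hr
        have hW'ne : W' ≠ [] := by
          rintro rfl
          simp at hq
          subst hq
          unfold NoCancel at hnc
          push_neg at hnc
          simp at hnc
        unfold NoCancel at hnc
        push_neg at hnc
        obtain ⟨h1, h2⟩ := hnc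
        -- p = (q.1, !q.2)
        have hq' : q ∈ W'.getLast? := by
          rcases W' with _ | ⟨w, ws⟩
          · exact absurd rfl hW'ne
          · rwa [List.getLast?_cons_cons] at hq
        have hdec : W'.dropLast ++ [q] = W' := List.dropLast_append_getLast? q hq'
        set c : FreeGroup α := mk [p] with hc
        have hcinv : c⁻¹ = mk [(p.1, !p.2)] := by
          rw [hc, inv_mk]
          simp [invRev]
        have hy1 : c⁻¹ * x = mk W' := by
          rw [hcinv, hxW, conj_head_tail]
        have hy2 : c⁻¹ * x * c = mk W'.dropLast := by
          rw [hy1, hc, mul_mk, ← hdec]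
          have hpq : (p.1, p.2) = (q.1, !q.2) := by rw [h1, h2]
          have : Red.Step (W'.dropLast ++ (q.1, q.2) :: (q.1, !q.2) :: [])
              (W'.dropLast ++ []) := Red.Step.not
          have := Quot.sound this
          exact Quot.sound (by simpa [← hpq] using (Red.Step.not : Red.Step (W'.dropLast ++ (q.1, q.2) :: (q.1, !q.2) :: [])
              (W'.dropLast ++ [])))
        have hylen : (c⁻¹ * x * c).toWord.length ≤ n := by
          rw [hy2]
          refine le_trans (norm_mk_le) ?_
          have : W'.length ≤ n := by
            have := hx
            rw [hW] at this
            simpa using this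
          calc W'.dropLast.length ≤ W'.length := by
                rw [List.length_dropLast]; omega
          _ ≤ n := this
        have hypow : (c⁻¹ * x * c) ^ (k + 1) = 1 := by
          rw [show c⁻¹ * x * c = c⁻¹ * x * (c⁻¹)⁻¹ by rw [inv_inv], conj_pow, hk]
          simp
        have := ih (c⁻¹ * x * c) hylen k hypow
        have : x = c * (c⁻¹ * x * c) * c⁻¹ := by group
        rw [this]
        rw [ih (c⁻¹ * x * c) hylen k hypow]
        group

lemma torsionFree (x : FreeGroup α) (k : ℕ) (h : x ^ (k + 1) = 1) : x = 1 := by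
  classical
  exact torsionFree_aux x.toWord.length x le_rfl k h

lemma zpow_eq_one {c : FreeGroup α} {k : ℤ} (h : c ^ k = 1) (hc : c ≠ 1) : k = 0 := by
  by_contra hk
  apply hc
  have habs : c ^ k.natAbs = 1 := by
    rcases Int.natAbs_eq k with he | he
    · rw [← zpow_natCast, ← he]; exact h
    · have h2 : (k.natAbs : ℤ) = -k := by omega
      rw [← zpow_natCast, h2, zpow_neg, h, inv_one]
  have hne : k.natAbs ≠ 0 := by omega
  obtain ⟨m, hm⟩ := Nat.exists_eq_succ_of_ne_zero hne
  refine torsionFree c m ?_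
  rw [hm] at habs
  exact habs

lemma eq_replicate_of_append {β : Type*} (t : β) :
    ∀ L : List β, L ++ [t] = t :: L → L = List.replicate L.length t := by
  intro L
  induction L with
  | nil => intro _; rfl
  | cons x L ih =>
    intro h
    simp only [List.cons_append, List.cons.injEq] at h
    obtain ⟨rfl, h2⟩ := h
    rw [List.length_cons, List.replicate_succ]
    exact congrArg (List.cons x) (ih h2)

lemma commute_of_aux [DecidableEq α] :
    ∀ n : ℕ, ∀ z : FreeGroup α, z.toWord.length ≤ n → ∀ a : α,
      z * of a = of a * z → ∃ k : ℤ, z = of a ^ k := by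
  intro n
  induction n with
  | zero =>
    intro z hz a _
    exact ⟨0, by rw [toWord_eq_nil_iff.mp (List.eq_nil_of_length_eq_zero (Nat.le_zero.mp hz)),
      zpow_zero]⟩
  | succ n ih =>
    intro z hz a hcomm
    rcases hW : z.toWord with _ | ⟨⟨b, s⟩, W'⟩
    · exact ⟨0, by rw [toWord_eq_nil_iff.mp hW, zpow_zero]⟩
    · have hzW : z = mk ((b, s) :: W') := by rw [← hW, mk_toWord]
      have hred : reduce z.toWord = z.toWord := reduce_toWord z
      by_cases hcase : b = a ∧ s = false
      · -- of a * z cancels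
        obtain ⟨rfl, rfl⟩ := hcase
        set z' : FreeGroup α := of b * z with hz'
        have hz'W : z' = mk W' := by
          have h := conj_head_tail (p := ((b, false) : α × Bool)) (W := W')
          simp only [Bool.not_false] at h
          rw [hz', hzW]
          exact h
        have hz'len : z'.toWord.length ≤ n := by
          rw [hz'W]
          refine le_trans norm_mk_le ?_
          have h3 := hz
          rw [hW] at h3
          simpa using h3
        have hz'comm : z' * of b = of b * z' := by
          rw [hz']
          calc of b * z * of b = of b * (z * of b) := by group
          _ = of b * (of b * z) := by rw [hcomm]
        obtain ⟨k, hk⟩ := ih z' hz'len b hz'comm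
        refine ⟨k - 1, ?_⟩
        have hzeq : z = (of b)⁻¹ * z' := by rw [hz']; group
        rw [hzeq, hk, zpow_sub_one]
        exact ((Commute.refl (of b)).zpow_right k).inv_left.eq
      · -- no cancellation when multiplying of a on the left
        have hcond : ¬((a, true).1 = b ∧ (a, true).2 = !s) := by
          rintro ⟨h1, h2⟩
          apply hcase
          constructor
          · exact h1.symm
          · simpa using h2.symm
        have hredcons : reduce ((a, true) :: z.toWord) = (a, true) :: z.toWord := by
          rw [reduce.cons, hred, hW]
          dsimp only
          rw [if_neg hcond]
        have hoz : (of a * z).toWord = (a, true) :: z.toWord := by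
          conv_lhs => rw [of, ← mk_toWord (x := z), mul_mk]
          rw [toWord_mk]
          exact hredcons
        have hza : (z * of a).toWord = (a, true) :: z.toWord := by
          rw [hcomm]; exact hoz
        have hzared : reduce (z.toWord ++ [(a, true)]) = (a, true) :: z.toWord := by
          have : z * of a = mk (z.toWord ++ [(a, true)]) := by
            conv_lhs => rw [← mk_toWord (x := z), of, mul_mk]
          rw [← toWord_mk, ← this, hza]
        have hredred : Red (z.toWord ++ [(a, true)]) ((a, true) :: z.toWord) := by
          rw [← hzared]; exact reduce.red
        have hlen : ((a, true) :: z.toWord).length = (z.toWord ++ [(a, true)]).length := by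
          simp
        have heq : z.toWord ++ [(a, true)] = (a, true) :: z.toWord :=
          (hredred.sublist.eq_of_length hlen).symm
        have hrep : z.toWord = List.replicate z.toWord.length (a, true) :=
          eq_replicate_of_append _ _ heq
        refine ⟨(z.toWord.length : ℤ), ?_⟩
        rw [zpow_natCast]
        apply toWord_injective
        rw [toWord_of_pow, ← hrep]

lemma commute_of {z : FreeGroup α} {a : α} (h : z * of a = of a * z) :
    ∃ k : ℤ, z = of a ^ k := by
  classical
  exact commute_of_aux z.toWord.length z le_rfl a h

/-- A free group with nontrivial center is cyclic. -/
lemma cyclic_of_center {β : Type*} (z : FreeGroup β) (hz : z ≠ 1)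
    (hc : ∀ x : FreeGroup β, z * x = x * z) :
    ∃ c : FreeGroup β, ∀ x : FreeGroup β, ∃ k : ℤ, x = c ^ k := by
  classical
  by_cases hsub : ∀ b b' : β, b = b'
  · by_cases hne : Nonempty β
    · obtain ⟨b⟩ := hne
      refine ⟨of b, fun x => ?_⟩
      have hx : x * of b = of b * x := by
        induction x using FreeGroup.induction_on with
        | C1 => simp
        | of y => rw [hsub y b]
        | inv_of y hy =>
          have hy' : of y * of b = of b * of y := hy
          calc (of y)⁻¹ * of b = (of y)⁻¹ * (of b * of y) * (of y)⁻¹ := by group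
          _ = (of y)⁻¹ * (of y * of b) * (of y)⁻¹ := by rw [hy']
          _ = of b * (of y)⁻¹ := by group
        | mul x y hx hy =>
          calc x * y * of b = x * (y * of b) := by group
          _ = x * (of b * y) := by rw [hy]
          _ = (x * of b) * y := by group
          _ = of b * (x * y) := by rw [hx]; group
      exact commute_of hx
    · refine ⟨1, fun x => ⟨0, ?_⟩⟩
      rw [zpow_zero]
      apply toWord_eq_nil_iff.mp
      rcases h : x.toWord with _ | ⟨p, _⟩
      · rfl
      · exact absurd ⟨p.1⟩ hne
  · push_neg at hsub
    obtain ⟨b, b', hbb⟩ := hsub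
    exfalso
    obtain ⟨k, hk⟩ := commute_of (hc (of b))
    obtain ⟨k', hk'⟩ := commute_of (hc (of b'))
    have hk0 : k ≠ 0 := by
      rintro rfl
      rw [zpow_zero] at hk
      exact hz hk
    let ψ : FreeGroup β →* Multiplicative ℤ :=
      FreeGroup.lift fun x => if x = b then Multiplicative.ofAdd (1 : ℤ) else 1
    have h1 : ψ z = Multiplicative.ofAdd k := by
      rw [hk, map_zpow]
      have : ψ (of b) = Multiplicative.ofAdd (1 : ℤ) := by
        simp [ψ, FreeGroup.lift_apply_of]
      rw [this, ← ofAdd_zsmul]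
      norm_num
    have h2 : ψ z = 1 := by
      rw [hk', map_zpow]
      have : ψ (of b') = 1 := by
        simp [ψ, FreeGroup.lift_apply_of, Ne.symm hbb]
      rw [this, one_zpow]
    rw [h1] at h2
    exact hk0 (by simpa using h2)

/-- The centralizer of a nontrivial element of a free group is cyclic. -/
lemma centralizer_cyclic (u : FreeGroup α) (hu : u ≠ 1) :
    ∃ c : FreeGroup α, ∀ x : FreeGroup α, x * u = u * x → ∃ k : ℤ, x = c ^ k := by
  set C : Subgroup (FreeGroup α) := Subgroup.centralizer {u} with hC
  have huC : u ∈ C := by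
    rw [hC, Subgroup.mem_centralizer_iff]
    rintro h hh
    simp only [Set.mem_singleton_iff] at hh
    subst hh
    rfl
  let e : FreeGroup (IsFreeGroup.Generators C) ≃* C := IsFreeGroup.mulEquiv C
  set z : FreeGroup (IsFreeGroup.Generators C) := e.symm ⟨u, huC⟩ with hz
  have hz1 : z ≠ 1 := by
    intro h
    apply hu
    have h2 : e z = e 1 := congrArg e h
    rw [hz, MulEquiv.apply_symm_apply, _root_.map_one] at h2
    exact congrArg Subtype.val h2
  have hzc : ∀ w, z * w = w * z := by
    intro w
    apply e.injective
    rw [_root_.map_mul, _root_.map_mul, hz, MulEquiv.apply_symm_apply]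
    have hw : (e w : FreeGroup α) ∈ Subgroup.centralizer {u} := (e w).2
    rw [Subgroup.mem_centralizer_iff] at hw
    exact Subtype.ext (hw u (Set.mem_singleton u))
  obtain ⟨c₀, hc₀⟩ := cyclic_of_center z hz1 hzc
  refine ⟨(e c₀ : C), fun x hx => ?_⟩
  have hxC : x ∈ C := by
    rw [hC, Subgroup.mem_centralizer_iff]
    rintro h hh
    simp only [Set.mem_singleton_iff] at hh
    subst hh
    exact hx.symm
  obtain ⟨k, hk⟩ := hc₀ (e.symm ⟨x, hxC⟩)
  refine ⟨k, ?_⟩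
  have h2 : (⟨x, hxC⟩ : C) = e c₀ ^ k := by
    have h3 := congrArg e hk
    rwa [MulEquiv.apply_symm_apply, _root_.map_zpow] at h3
  have h4 := congrArg Subtype.val h2
  simpa using h4

/-- Commutation transitivity in free groups. -/
lemma free_CT {u x y : FreeGroup α} (hu : u ≠ 1) (hx : x * u = u * x) (hy : y * u = u * y) :
    x * y = y * x := by
  obtain ⟨c, hc⟩ := centralizer_cyclic u hu
  obtain ⟨i, hi⟩ := hc x hx
  obtain ⟨j, hj⟩ := hc y hy
  rw [hi, hj, ← zpow_add, ← zpow_add, add_comm]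

/-- Free groups are CSA: if a nontrivial element commutes with a conjugate of itself, the
conjugator commutes with it. -/
lemma free_CSA {u g : FreeGroup α} (hu : u ≠ 1)
    (h : u * (g * u * g⁻¹) = (g * u * g⁻¹) * u) : u * g = g * u := by
  obtain ⟨c, hc⟩ := centralizer_cyclic u hu
  obtain ⟨n, hn⟩ := hc u rfl
  have hc1 : c ≠ 1 := by rintro rfl; rw [one_zpow] at hn; exact hu hn
  have hgu : g * u * g⁻¹ ≠ 1 := by
    intro h0
    apply hu
    have h1 : u = g⁻¹ * (g * u * g⁻¹) * g := by group
    rw [h1, h0]; group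
  have hcu : c * u = u * c := by
    conv_lhs => rw [hn]
    conv_rhs => rw [hn]
    rw [← zpow_add_one, ← zpow_one_add, add_comm]
  have h1 : (g * c * g⁻¹) * (g * u * g⁻¹) = (g * u * g⁻¹) * (g * c * g⁻¹) := by
    rw [show (g * c * g⁻¹) * (g * u * g⁻¹) = g * (c * u) * g⁻¹ by group, hcu,
        show g * (u * c) * g⁻¹ = (g * u * g⁻¹) * (g * c * g⁻¹) by group]
  have h2 : (g * c * g⁻¹) * u = u * (g * c * g⁻¹) := free_CT hgu h1 h
  obtain ⟨s, hs⟩ := hc _ h2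
  have h' : (g⁻¹ * u * g) * u = u * (g⁻¹ * u * g) := by
    calc (g⁻¹ * u * g) * u = g⁻¹ * (u * (g * u * g⁻¹)) * g := by group
    _ = g⁻¹ * ((g * u * g⁻¹) * u) * g := by rw [h]
    _ = u * (g⁻¹ * u * g) := by group
  have hgu' : g⁻¹ * u * g ≠ 1 := by
    intro h0
    apply hu
    have h1' : u = g * (g⁻¹ * u * g) * g⁻¹ := by group
    rw [h1', h0]; group
  have h1' : (g⁻¹ * c * g) * (g⁻¹ * u * g) = (g⁻¹ * u * g) * (g⁻¹ * c * g) := by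
    rw [show (g⁻¹ * c * g) * (g⁻¹ * u * g) = g⁻¹ * (c * u) * g by group, hcu,
        show g⁻¹ * (u * c) * g = (g⁻¹ * u * g) * (g⁻¹ * c * g) by group]
  have h2' : (g⁻¹ * c * g) * u = u * (g⁻¹ * c * g) := free_CT hgu' h1' h'.symm
  obtain ⟨t, ht⟩ := hc _ h2'
  have hkey : c ^ (t * s) = c ^ (1 : ℤ) := by
    rw [zpow_mul]
    calc (c ^ t) ^ s = (g⁻¹ * c * g) ^ s := by rw [ht]
    _ = g⁻¹ * c ^ s * g := by
        rw [show g⁻¹ * c * g = g⁻¹ * c * g⁻¹⁻¹ by rw [inv_inv], conj_zpow, inv_inv]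
    _ = g⁻¹ * (g * c * g⁻¹) * g := by rw [hs]
    _ = c ^ (1 : ℤ) := by rw [zpow_one]; group
  have hts : t * s - 1 = 0 := by
    apply zpow_eq_one _ hc1
    rw [zpow_sub, hkey]
    simp
  have hts1 : t * s = 1 := by omega
  rcases Int.mul_eq_one_iff_eq_one_or_neg_one.mp hts1 with ⟨ht1, hs1⟩ | ⟨ht1, hs1⟩
  · rw [hs1, zpow_one] at hs
    have hgc : g * c = c * g := by
      calc g * c = (g * c * g⁻¹) * g := by group
      _ = c * g := by rw [hs]
    rw [hn]
    exact ((show Commute g c from hgc).zpow_right n).eq.symm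
  · rw [hs1] at hs
    have hg2c : (g * g) * c = c * (g * g) := by
      have e1 : (g * g) * c * (g * g)⁻¹ = g * (g * c * g⁻¹) * g⁻¹ := by group
      rw [hs] at e1
      have e2 : g * c ^ (-1 : ℤ) * g⁻¹ = (g * c * g⁻¹) ^ (-1 : ℤ) := by rw [conj_zpow]
      rw [e2, hs] at e1
      have e3 : ((c ^ (-1 : ℤ)) ^ (-1 : ℤ)) = c := by simp
      rw [e3] at e1
      calc (g * g) * c = ((g * g) * c * (g * g)⁻¹) * (g * g) := by group
      _ = c * (g * g) := by rw [e1]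
    have hg2u : (g * g) * u = u * (g * g) := by
      rw [hn]
      exact ((show Commute (g * g) c from hg2c).zpow_right n).eq
    obtain ⟨j, hj⟩ := hc _ hg2u
    have hj2 : c ^ (-j) = c ^ j := by
      have e1 : g * (g * g) * g⁻¹ = g * g := by group
      rw [hj] at e1
      have e2 : g * c ^ j * g⁻¹ = (g * c * g⁻¹) ^ j := by rw [conj_zpow]
      rw [e2, hs, ← zpow_mul] at e1
      calc c ^ (-j) = c ^ (-1 * j) := by norm_num
      _ = c ^ j := e1
    have hj0 : j = 0 := by
      have e4 : c ^ (j + j) = 1 := by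
        rw [zpow_add]
        conv_lhs => rw [show (c ^ j : FreeGroup α) * c ^ j = c ^ (-j) * c ^ j from by rw [hj2]]
        rw [← zpow_add]
        simp
      have := zpow_eq_one e4 hc1
      omega
    rw [hj0, zpow_zero] at hj
    have hg1 : g = 1 := by
      apply torsionFree g 1
      rw [show (1 : ℕ) + 1 = 2 from rfl, pow_two]
      exact hj
    exfalso
    apply hc1
    rw [hg1] at hs
    simp only [one_mul, inv_one, mul_one] at hs
    have hs' : c = c⁻¹ := by rw [← zpow_neg_one]; exact hs
    have e5 : c * c = 1 := by
      nth_rewrite 2 [hs']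
      exact mul_inv_cancel c
    exact torsionFree c 1 (by rw [show (1 : ℕ) + 1 = 2 from rfl, pow_two]; exact e5)

end CSAAux

/-- Every fully residually free group is CSA: every maximal abelian subgroup `A` is
malnormal, i.e. for every `g ∉ A` the intersection `gAg⁻¹ ∩ A` is trivial. -/
theorem fullyResiduallyFree_CSA (G : Type) [Group G] (hG : FullyResiduallyFree G)
    (A : Subgroup G)
    (habelian : ∀ x ∈ A, ∀ y ∈ A, x * y = y * x)
    (hmax : ∀ B : Subgroup G, (∀ x ∈ B, ∀ y ∈ B, x * y = y * x) → A ≤ B → B = A) :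
    ∀ g : G, g ∉ A → ∀ a ∈ A, g * a * g⁻¹ ∈ A → a = 1 := by
  classical
  intro g hg a ha hconj
  by_contra hane
  have hCT : ∀ x y : G, x * a = a * x → y * a = a * y → x * y = y * x := by
    intro x y hx hy
    obtain ⟨α, φ, hinj⟩ := hG {1, a, x * y, y * x}
    have hu : φ a ≠ 1 := by
      intro h0
      exact hane (hinj (by simp) (by simp) (by rw [h0, map_one]))
    have hφx : φ x * φ a = φ a * φ x := by rw [← map_mul, ← map_mul, hx]
    have hφy : φ y * φ a = φ a * φ y := by rw [← map_mul, ← map_mul, hy]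
    have hxy := CSAAux.free_CT hu hφx hφy
    exact hinj (by simp) (by simp) (by rw [map_mul, map_mul, hxy])
  have hcga : g * a = a * g := by
    obtain ⟨α, φ, hinj⟩ := hG {1, a, g * a, a * g}
    have hu : φ a ≠ 1 := by
      intro h0
      exact hane (hinj (by simp) (by simp) (by rw [h0, map_one]))
    have hab : a * (g * a * g⁻¹) = (g * a * g⁻¹) * a := habelian a ha _ hconj
    have hφ : φ a * (φ g * φ a * (φ g)⁻¹) = (φ g * φ a * (φ g)⁻¹) * φ a := by
      have h3 := congrArg φ hab
      simpa only [map_mul, map_inv] using h3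
    have hag := CSAAux.free_CSA hu hφ
    exact hinj (by simp) (by simp) (by rw [map_mul, map_mul]; exact hag.symm)
  have hmemB : ∀ x : G, x * a = a * x → x ∈ Subgroup.centralizer {a} := by
    intro x hx
    rw [Subgroup.mem_centralizer_iff]
    rintro h hh
    simp only [Set.mem_singleton_iff] at hh
    subst hh
    exact hx.symm
  have hAB : A ≤ Subgroup.centralizer {a} := fun x hx => hmemB x (habelian x hx a ha)
  have hBab : ∀ x ∈ Subgroup.centralizer {a}, ∀ y ∈ Subgroup.centralizer {a}, x * y = y * x := by
    intro x hx y hy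
    rw [Subgroup.mem_centralizer_iff] at hx hy
    exact hCT x y (hx a (Set.mem_singleton a)).symm (hy a (Set.mem_singleton a)).symm
  have hBA := hmax _ hBab hAB
  apply hg
  rw [← hBA]
  exact hmemB g hcga
end

section
/- Let G be a fully residually free group and let A, B be abelian subgroups of G such that there exist a ∈ A and b ∈ B with [a,b] ≠ 1. Then ⟨A,B⟩ = A ∗ B; that is, the canonical homomorphism from the free product A ∗ B to G induced by the inclusions of A and B is injective, with image the subgroup generated by A and B. -/
open FreeGroup List

variable {α : Type*} [DecidableEq α]

/-- A word with no adjacent cancelling pair is reduced. -/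
theorem reduce_eq_self_of_chain' {L : List (α × Bool)}
    (h : L.Chain' (fun a b => ¬(a.1 = b.1 ∧ a.2 = !b.2))) : FreeGroup.reduce L = L := by
  induction L with
  | nil => rfl
  | cons x L ih =>
    have htail : FreeGroup.reduce L = L := ih h.tail
    rw [FreeGroup.reduce.cons, htail]
    cases L with
    | nil => rfl
    | cons hd tl =>
      have : ¬(x.1 = hd.1 ∧ x.2 = !hd.2) := (List.isChain_cons_cons.mp h).1
      simp only [this, if_false]

/-- No adjacent cancelling pair in a reduced word. -/
theorem no_cancel_of_reduce_eq_self {L : List (α × Bool)} (h : FreeGroup.reduce L = L)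
    {i : ℕ} {x : α} {b : Bool} (h1 : L[i]? = some (x, b)) (h2 : L[i+1]? = some (x, !b)) :
    False := by
  have hi1 : i + 1 < L.length := (List.getElem?_eq_some_iff.mp h2).1
  have hi : i < L.length := by omega
  have e1 : L[i] = (x, b) := by simpa [List.getElem?_eq_getElem hi] using h1
  have e2 : L[i+1] = (x, !b) := by simpa [List.getElem?_eq_getElem hi1] using h2
  have hdecomp : L = L.take i ++ (x, b) :: (x, !b) :: L.drop (i + 2) := by
    conv_lhs => rw [← List.take_append_drop i L]
    congr 1
    rw [List.drop_eq_getElem_cons hi, e1]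
    congr 1
    rw [List.drop_eq_getElem_cons hi1, e2]
  exact FreeGroup.reduce.not (h.trans hdecomp)


theorem zpow_of_eq_mk {β : Type*} [DecidableEq β] (b : β) (m : ℤ) :
    (FreeGroup.of b) ^ m = FreeGroup.mk (List.replicate m.natAbs (b, decide (0 ≤ m))) := by
  have hpos : ∀ k : ℕ, (FreeGroup.of b) ^ (k : ℤ) = FreeGroup.mk (List.replicate k (b, true)) := by
    intro k
    rw [zpow_natCast, ← FreeGroup.toWord_of_pow, FreeGroup.mk_toWord]
  rcases le_or_gt 0 m with hm | hm
  · obtain ⟨k, rfl⟩ := Int.eq_ofNat_of_zero_le hm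
    rw [hpos k]
    simp [hm]
  · obtain ⟨k, hk⟩ : ∃ k : ℕ, m = -(k : ℤ) := ⟨m.natAbs, by omega⟩
    subst hk
    rw [zpow_neg, hpos k, FreeGroup.inv_mk]
    have : FreeGroup.invRev (List.replicate k (b, true)) = List.replicate k (b, false) := by
      simp [FreeGroup.invRev]
    rw [this]
    have h1 : (-(k:ℤ)).natAbs = k := by omega
    have h2 : decide (0 ≤ -(k:ℤ)) = false := by simp; omega
    rw [h1, h2]

theorem alt_zpow_ne_one {β : Type*} [DecidableEq β] (l : List (β × ℤ)) (hne : l ≠ [])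
    (h0 : ∀ x ∈ l, x.2 ≠ 0) (hch : l.Chain' (fun x y => x.1 ≠ y.1)) :
    (l.map (fun x => (FreeGroup.of x.1) ^ x.2)).prod ≠ 1 := by
  classical
  set blk : β × ℤ → List (β × Bool) :=
    fun x => List.replicate x.2.natAbs (x.1, decide (0 ≤ x.2)) with hblk
  have hprod : ∀ L : List (β × ℤ),
      (L.map (fun x => (FreeGroup.of x.1) ^ x.2)).prod = FreeGroup.mk (L.map blk).flatten := by
    intro L
    induction L with
    | nil => simp [FreeGroup.one_eq_mk]
    | cons x L ih =>
      rw [List.map_cons, List.prod_cons, ih, List.map_cons, List.flatten_cons,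
        zpow_of_eq_mk, FreeGroup.mul_mk]
  set flat := (l.map blk).flatten with hflat
  have hblkne : ∀ x ∈ l, blk x ≠ [] := by
    intro x hx
    have := h0 x hx
    simp only [hblk, ne_eq, List.replicate_eq_nil_iff]
    omega
  have hflatne : flat ≠ [] := by
    rw [hflat]
    intro hcon
    rw [List.flatten_eq_nil_iff] at hcon
    cases l with
    | nil => exact hne rfl
    | cons x L =>
      exact hblkne x (List.mem_cons_self (a := x) (l := L)) (hcon (blk x) (by simp))
  have hchain : flat.Chain' (fun a b => ¬(a.1 = b.1 ∧ a.2 = !b.2)) := by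
    rw [hflat]
    unfold List.Chain'
    rw [List.isChain_flatten (by
      intro hmem
      obtain ⟨x, hx, hx2⟩ := List.mem_map.mp hmem
      exact hblkne x hx hx2)]
    constructor
    · intro li hli
      obtain ⟨x, hx, rfl⟩ := List.mem_map.mp hli
      apply List.isChain_replicate_of_rel
      simp
    · rw [List.isChain_map]
      apply List.IsChain.imp ?_ hch
      intro x y hxy a ha b hb hab
      apply hxy
      have ha' : a = (x.1, decide (0 ≤ x.2)) := by
        have := List.mem_of_mem_getLast? ha
        simpa [hblk] using (List.eq_of_mem_replicate this)
      have hb' : b = (y.1, decide (0 ≤ y.2)) := by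
        have := List.mem_of_mem_head? hb
        simpa [hblk] using (List.eq_of_mem_replicate this)
      rw [ha', hb'] at hab
      exact hab.1
  have hred : FreeGroup.reduce flat = flat := reduce_eq_self_of_chain' hchain
  rw [hprod l, ← hflat]
  intro hcon
  have : (FreeGroup.mk flat).toWord = [] := by rw [hcon, FreeGroup.toWord_one]
  rw [FreeGroup.toWord_mk, hred] at this
  exact hflatne this

/-- Extend an injective-on-`s` self map of a finite type to a permutation. -/
theorem exists_perm_extend {X : Type*} [Fintype X] [DecidableEq X] (f : X → X) (s : Finset X)
    (hinj : Set.InjOn f s) : ∃ σ : Equiv.Perm X, ∀ i ∈ s, σ i = f i := by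
  obtain ⟨g, hg⟩ := Finset.exists_equiv_extend_of_card_eq (t := (Finset.univ : Finset X))
    (by simp) (s := s) (f := f) (by simp) (by simpa using hinj)
  exact ⟨g.trans (Equiv.subtypeUnivEquiv (by simp)), fun i hi => by
    simp [Equiv.subtypeUnivEquiv, hg i hi]⟩

/-- Residual finiteness of free groups, via permutation representations. -/
theorem exists_perm_rep (w : FreeGroup α) (hw : w ≠ 1) :
    ∃ (n : ℕ) (σ : α → Equiv.Perm (Fin (n+1))), FreeGroup.lift σ w ≠ 1 := by
  classical
  set L : List (α × Bool) := w.toWord with hL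
  have hred : FreeGroup.reduce L = L := FreeGroup.reduce_toWord w
  set n : ℕ := L.length with hn
  have hex : ∀ a : α, ∃ σa : Equiv.Perm (Fin (n+1)),
      (∀ i : ℕ, (hi : i < n) → L[i]? = some (a, true) →
        σa ⟨i+1, by omega⟩ = ⟨i, by omega⟩) ∧
      (∀ i : ℕ, (hi : i < n) → L[i]? = some (a, false) →
        σa ⟨i, by omega⟩ = ⟨i+1, by omega⟩) := by
    intro a
    set c1 : Fin (n+1) → Prop := fun j => L[(j:ℕ)]? = some (a, false) with hc1
    set c2 : Fin (n+1) → Prop := fun j => 0 < (j:ℕ) ∧ L[((j:ℕ)-1)]? = some (a, true) with hc2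
    have hlt : ∀ j : Fin (n+1), c1 j → (j:ℕ) < n := fun j hj => by
      have := (List.getElem?_eq_some_iff.mp hj).1; omega
    have hexcl : ∀ j : Fin (n+1), c1 j → c2 j → False := by
      rintro j h1 ⟨hj0, h2⟩
      have he : ((j:ℕ)-1) + 1 = (j:ℕ) := by omega
      exact no_cancel_of_reduce_eq_self hred h2 (by rw [he]; simpa using h1)
    set f : Fin (n+1) → Fin (n+1) := fun j =>
      if h1 : c1 j then ⟨(j:ℕ)+1, by have := hlt j h1; omega⟩
      else if h2 : c2 j then ⟨(j:ℕ)-1, by have := j.isLt; omega⟩ else j with hf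
    have v1 : ∀ j : Fin (n+1), (hj : c1 j) → f j = ⟨(j:ℕ)+1, by have := hlt j hj; omega⟩ := by
      intro j hj
      simp only [hf]
      rw [dif_pos hj]
    have v2 : ∀ j : Fin (n+1), (hj : c2 j) → f j = ⟨(j:ℕ)-1, by have := j.isLt; omega⟩ := by
      intro j hj
      have hnc : ¬ c1 j := fun h => hexcl j h hj
      simp only [hf]
      rw [dif_neg hnc, dif_pos hj]
    set s : Finset (Fin (n+1)) := Finset.univ.filter (fun j => c1 j ∨ c2 j) with hs
    have hinj : Set.InjOn f s := by
      intro j1 hj1 j2 hj2 hf12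
      simp only [hs, Finset.coe_filter, Set.mem_setOf_eq] at hj1 hj2
      rcases hj1.2 with h1 | h1 <;> rcases hj2.2 with h2 | h2
      · rw [v1 _ h1, v1 _ h2] at hf12
        exact Fin.ext (by have := congrArg Fin.val hf12; simpa using this)
      · rw [v1 _ h1, v2 _ h2] at hf12
        have hj2' : (j2:ℕ) - 1 = (j1:ℕ) + 1 := by
          have := congrArg Fin.val hf12; simp at this; omega
        exact absurd (no_cancel_of_reduce_eq_self hred h1
          (by rw [← hj2']; simpa using h2.2)) (fun h => h)
      · rw [v2 _ h1, v1 _ h2] at hf12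
        have hj1' : (j1:ℕ) - 1 = (j2:ℕ) + 1 := by
          have := congrArg Fin.val hf12; simp at this; omega
        exact absurd (no_cancel_of_reduce_eq_self hred h2
          (by rw [← hj1']; simpa using h1.2)) (fun h => h)
      · rw [v2 _ h1, v2 _ h2] at hf12
        have := congrArg Fin.val hf12
        simp at this
        exact Fin.ext (by omega)
    obtain ⟨σa, hσa⟩ := exists_perm_extend f s hinj
    refine ⟨σa, ?_, ?_⟩
    · intro i hi hget
      have hc2i : c2 ⟨i+1, by omega⟩ := ⟨by simp, by simpa using hget⟩
      have hmem : (⟨i+1, by omega⟩ : Fin (n+1)) ∈ s := by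
        rw [hs, Finset.mem_filter]
        exact ⟨Finset.mem_univ _, Or.inr hc2i⟩
      rw [hσa _ hmem, v2 _ hc2i]
      exact Fin.ext (show i + 1 - 1 = i by omega)
    · intro i hi hget
      have hc1i : c1 ⟨i, by omega⟩ := by simpa using hget
      have hmem : (⟨i, by omega⟩ : Fin (n+1)) ∈ s := by
        rw [hs, Finset.mem_filter]
        exact ⟨Finset.mem_univ _, Or.inl hc1i⟩
      rw [hσa _ hmem, v1 _ hc1i]
  choose σ hσpos hσneg using hex
  refine ⟨n, σ, ?_⟩
  have hLne : L ≠ [] := fun h => hw (FreeGroup.toWord_eq_nil_iff.mp (hL ▸ h))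
  have hn0 : 0 < n := by rw [hn]; exact List.length_pos_iff.mpr hLne
  set gfun : α × Bool → Equiv.Perm (Fin (n+1)) :=
    fun x => cond x.2 (σ x.1) (σ x.1)⁻¹ with hgfun
  have main : ∀ m, m ≤ n → ((L.drop (n-m)).map gfun).prod ⟨n, by omega⟩ = ⟨n-m, by omega⟩ := by
    intro m
    induction m with
    | zero =>
      intro _
      have hdrop : L.drop (n - 0) = [] := by
        simpa [hn] using List.drop_length L
      rw [hdrop]
      simp only [List.map_nil, List.prod_nil]
      exact Fin.ext (show n = n - 0 by omega)
    | succ m ih =>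
      intro hm1
      have hm : m ≤ n := by omega
      have hklen : n - (m+1) < L.length := by omega
      have hdrop : L.drop (n-(m+1)) = L[n-(m+1)] :: L.drop ((n-(m+1))+1) :=
        List.drop_eq_getElem_cons hklen
      have hk1 : (n-(m+1)) + 1 = n - m := by omega
      rw [hdrop, List.map_cons, List.prod_cons, Equiv.Perm.mul_apply, hk1, ih hm]
      have e : (⟨n-m, by omega⟩ : Fin (n+1)) = ⟨(n-(m+1))+1, by omega⟩ :=
        Fin.ext (show n - m = (n-(m+1))+1 by omega)
      rw [e]
      have hget : L[n-(m+1)]? = some (L[n-(m+1)].1, L[n-(m+1)].2) := by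
        rw [List.getElem?_eq_getElem hklen]
      cases hb : L[n-(m+1)].2 with
      | true =>
        have hp := hσpos (L[n-(m+1)].1) (n-(m+1)) (by omega) (by rwa [hb] at hget)
        simp only [hgfun, hb, cond_true]
        exact hp
      | false =>
        have hq := hσneg (L[n-(m+1)].1) (n-(m+1)) (by omega) (by rwa [hb] at hget)
        simp only [hgfun, hb, cond_false]
        rw [← hq, Equiv.Perm.inv_def, Equiv.symm_apply_apply]
  have hfinal := main n le_rfl
  have hd0 : L.drop (n - n) = L := by
    have : n - n = 0 := by omega
    rw [this, List.drop_zero]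
  rw [hd0] at hfinal
  have hvn : (⟨n - n, by omega⟩ : Fin (n+1)) = ⟨0, by omega⟩ :=
    Fin.ext (show n - n = 0 by omega)
  rw [hvn] at hfinal
  have hliftmk : FreeGroup.lift σ w = (L.map gfun).prod := by
    conv_lhs => rw [← FreeGroup.mk_toWord (x := w)]
    rw [FreeGroup.lift_mk]
  have hne : (L.map gfun).prod ≠ 1 := by
    intro h1
    rw [h1] at hfinal
    have h2 := congrArg Fin.val hfinal
    simp at h2
    omega
  intro hcon
  exact hne (hliftmk.symm.trans hcon)

theorem hopf_freeGroup_bool (ψ : FreeGroup Bool →* FreeGroup Bool)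
    (hsurj : Function.Surjective ψ) : Function.Injective ψ := by
  rw [← MonoidHom.ker_eq_bot_iff]
  rw [Subgroup.eq_bot_iff_forall]
  intro w hw
  by_contra hw1
  obtain ⟨n, τ, hτ⟩ := exists_perm_rep w hw1
  have : Finite (FreeGroup Bool →* Equiv.Perm (Fin (n+1))) := by
    apply Finite.of_injective
      (fun χ => (fun b => χ (FreeGroup.of b) : Bool → Equiv.Perm (Fin (n+1))))
    intro χ1 χ2 h
    exact FreeGroup.ext_hom χ1 χ2 (fun a => congrFun h a)
  have hinj : Function.Injective
      (fun χ : FreeGroup Bool →* Equiv.Perm (Fin (n+1)) => χ.comp ψ) := by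
    intro χ1 χ2 h
    exact (MonoidHom.cancel_right hsurj).mp h
  obtain ⟨χ, hχ⟩ := (Finite.injective_iff_surjective.mp hinj) (FreeGroup.lift τ)
  have heval : FreeGroup.lift τ w = 1 := by
    rw [← hχ]
    simp only [MonoidHom.comp_apply]
    rw [MonoidHom.mem_ker.mp hw]
    simp
  exact hτ heval


theorem freeGroup_of_not_commute {β : Type*} {t₁ t₂ : β} (h : t₁ ≠ t₂) :
    ¬ Commute (FreeGroup.of t₁) (FreeGroup.of t₂) := by
  classical
  intro hc
  set f : β → Equiv.Perm (Fin 3) :=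
    fun t => if t = t₁ then Equiv.swap 0 1 else Equiv.swap 1 2 with hf
  have hmap := hc.map (FreeGroup.lift f)
  simp only [FreeGroup.lift_apply_of] at hmap
  rw [hf] at hmap
  simp only [if_pos rfl, if_neg (Ne.symm h)] at hmap
  have : (Equiv.swap (0 : Fin 3) 1) * Equiv.swap 1 2 = Equiv.swap 1 2 * Equiv.swap 0 1 := hmap
  exact absurd this (by decide)

theorem freeGroup_subsingleton_cyclic {β : Type*} [Subsingleton β] :
    ∃ ζ : FreeGroup β, ∀ x : FreeGroup β, x ∈ Subgroup.zpowers ζ := by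
  by_cases hβ : Nonempty β
  · obtain ⟨t⟩ := hβ
    refine ⟨FreeGroup.of t, fun x => ?_⟩
    induction x using FreeGroup.induction_on with
    | C1 => exact one_mem _
    | of y => rw [Subsingleton.elim y t]; exact Subgroup.mem_zpowers _
    | inv_of y hy => exact inv_mem hy
    | mul y z hy hz => exact mul_mem hy hz
  · refine ⟨1, fun x => ?_⟩
    have hx : x = 1 := by
      rcases htw : x.toWord with _ | ⟨hd, tl⟩
      · exact FreeGroup.toWord_eq_nil_iff.mp htw
      · exact absurd ⟨hd.1⟩ hβ
    rw [hx]; exact one_mem _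

theorem closure_commute {Gp : Type*} [Group Gp] {S : Set Gp}
    (h : ∀ x ∈ S, ∀ y ∈ S, Commute x y) :
    ∀ x ∈ Subgroup.closure S, ∀ y ∈ Subgroup.closure S, Commute x y := by
  intro x hx y hy
  induction hx, hy using Subgroup.closure_induction₂ with
  | mem a b ha hb => exact h a ha b hb
  | one_left => exact Commute.one_left _
  | one_right => exact Commute.one_right _
  | mul_left a b c ha hb hc hab hac => exact hab.mul_left hac
  | mul_right a b c ha hb hc hab hac => exact hab.mul_right hac
  | inv_left a b ha hb hab => exact hab.inv_left
  | inv_right a b ha hb hab => exact hab.inv_right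

theorem exists_common_zpower {β : Type} (l : List (FreeGroup β))
    (hcomm : ∀ x ∈ l, ∀ y ∈ l, Commute x y) :
    ∃ z : FreeGroup β, ∀ x ∈ l, x ∈ Subgroup.zpowers z := by
  classical
  set S : Set (FreeGroup β) := {x | x ∈ l} with hS
  set H : Subgroup (FreeGroup β) := Subgroup.closure S with hH
  have hHcomm : ∀ h₁ h₂ : H, Commute h₁ h₂ := by
    intro h₁ h₂
    have := closure_commute (S := S) (fun x hx y hy => hcomm x hx y hy) h₁ h₁.2 h₂ h₂.2
    exact Subtype.ext this
  set T := IsFreeGroup.Generators H with hT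
  set ρ : H ≃* FreeGroup T := IsFreeGroup.toFreeGroup H with hρ
  have hsub : Subsingleton T := by
    by_contra hns
    rw [not_subsingleton_iff_nontrivial] at hns
    obtain ⟨t₁, t₂, hne⟩ := hns
    apply freeGroup_of_not_commute hne
    have := hHcomm (ρ.symm (FreeGroup.of t₁)) (ρ.symm (FreeGroup.of t₂))
    have := this.map ρ.toMonoidHom
    simpa using this
  obtain ⟨ζ, hζ⟩ := freeGroup_subsingleton_cyclic (β := T)
  refine ⟨(ρ.symm ζ : H), fun x hx => ?_⟩
  have hxH : x ∈ H := Subgroup.subset_closure hx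
  obtain ⟨k, hk⟩ := Subgroup.mem_zpowers_iff.mp (hζ (ρ ⟨x, hxH⟩))
  have : (ρ.symm ζ) ^ k = ⟨x, hxH⟩ := by
    rw [← map_zpow ρ.symm, hk, MulEquiv.symm_apply_apply]
  refine Subgroup.mem_zpowers_iff.mpr ⟨k, ?_⟩
  rw [← SubgroupClass.coe_zpow, this]

theorem two_gen_free {α : Type} (p q : FreeGroup α) (hpq : ¬ Commute p q) :
    Function.Injective (FreeGroup.lift (fun b : Bool => cond b p q)) := by
  classical
  set H : Subgroup (FreeGroup α) := Subgroup.closure {p, q} with hH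
  have hp : p ∈ H := Subgroup.subset_closure (by simp)
  have hq : q ∈ H := Subgroup.subset_closure (by simp)
  set ψ' : FreeGroup Bool →* H :=
    FreeGroup.lift (fun b => (cond b ⟨p, hp⟩ ⟨q, hq⟩ : H)) with hψ'
  have hfact : FreeGroup.lift (fun b : Bool => cond b p q) = H.subtype.comp ψ' := by
    apply FreeGroup.ext_hom
    intro b
    cases b <;> simp [hψ']
  have hsurj : Function.Surjective ψ' := by
    rw [← MonoidHom.range_eq_top, hψ', FreeGroup.range_lift_eq_closure]
    rw [eq_top_iff, ← Subgroup.closure_preimage_eq_top ({p, q} : Set (FreeGroup α))]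
    apply Subgroup.closure_mono
    rintro z hz
    simp only [Set.mem_preimage, Set.mem_insert_iff, Set.mem_singleton_iff] at hz
    rcases hz with hz | hz
    · exact ⟨true, Subtype.ext hz.symm⟩
    · exact ⟨false, Subtype.ext hz.symm⟩
  set T := IsFreeGroup.Generators H with hT
  set ρ : H ≃* FreeGroup T := IsFreeGroup.toFreeGroup H with hρ
  set θ : FreeGroup Bool →* FreeGroup T := ρ.toMonoidHom.comp ψ' with hθ
  have hθsurj : Function.Surjective θ := ρ.surjective.comp hsurj
  -- T has no three distinct elements
  have hno3 : ∀ t₁ t₂ t₃ : T, t₁ ≠ t₂ → t₁ ≠ t₃ → t₂ ≠ t₃ → False := by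
    intro t₁ t₂ t₃ h12 h13 h23
    set K := Multiplicative (ZMod 2) with hK
    set Φ : (T → K) → (Bool → K) := fun g b => (FreeGroup.lift g) (θ (FreeGroup.of b)) with hΦ
    have hΦinj : Function.Injective Φ := by
      intro g₁ g₂ hg
      have : (FreeGroup.lift g₁).comp θ = (FreeGroup.lift g₂).comp θ := by
        apply FreeGroup.ext_hom
        intro b
        exact congrFun hg b
      have := (MonoidHom.cancel_right hθsurj).mp this
      exact FreeGroup.lift.injective this
    set ι : (Fin 3 → K) → (T → K) := fun g t =>
      if t = t₁ then g 0 else if t = t₂ then g 1 else if t = t₃ then g 2 else 1 with hι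
    have hιinj : Function.Injective ι := by
      intro g₁ g₂ hg
      funext i
      fin_cases i
      · have := congrFun hg t₁; simpa [hι] using this
      · have := congrFun hg t₂; simpa [hι, h12.symm] using this
      · have := congrFun hg t₃; simpa [hι, h13.symm, h23.symm] using this
    have hcard := Fintype.card_le_of_injective _ (hΦinj.comp hιinj)
    simp only [Fintype.card_fun, Fintype.card_fin, Fintype.card_bool] at hcard
    have : (2:ℕ)^3 ≤ 2^2 := by
      simpa [hK] using hcard
    omega
  -- T is not subsingleton
  have hnsub : ¬ Subsingleton T := by
    intro hsub
    obtain ⟨ζ, hζ⟩ := freeGroup_subsingleton_cyclic (β := T)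
    have hcommT : Commute (ρ ⟨p, hp⟩) (ρ ⟨q, hq⟩) := by
      obtain ⟨k₁, hk₁⟩ := Subgroup.mem_zpowers_iff.mp (hζ (ρ ⟨p, hp⟩))
      obtain ⟨k₂, hk₂⟩ := Subgroup.mem_zpowers_iff.mp (hζ (ρ ⟨q, hq⟩))
      rw [← hk₁, ← hk₂]
      exact (Commute.refl ζ).zpow_zpow k₁ k₂
    have := hcommT.map ρ.symm.toMonoidHom
    simp only [MulEquiv.coe_toMonoidHom, MulEquiv.symm_apply_apply] at this
    have hHc : Commute p q := by
      have := congrArg (Subtype.val) (this.eq)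
      push_cast at this
      exact this
    exact hpq hHc
  rw [not_subsingleton_iff_nontrivial] at hnsub
  obtain ⟨t₁, t₂, h12⟩ := hnsub
  have htot : ∀ t : T, t = t₁ ∨ t = t₂ := by
    intro t
    by_contra hcon
    push_neg at hcon
    exact hno3 t₁ t₂ t h12 (Ne.symm hcon.1) (Ne.symm hcon.2)
  have hbij : Function.Bijective (fun t : T => decide (t = t₁)) := by
    constructor
    · intro s₁ s₂ hs
      rcases htot s₁ with rfl | rfl <;> rcases htot s₂ with rfl | rfl <;>
        simp_all
    · intro b
      cases b
      · exact ⟨t₂, by simp [h12.symm]⟩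
      · exact ⟨t₁, by simp⟩
  set e : T ≃ Bool := Equiv.ofBijective _ hbij with he
  set iso : H ≃* FreeGroup Bool := ρ.trans (FreeGroup.freeGroupCongr e) with hiso
  have hΨ : Function.Injective (iso.toMonoidHom.comp ψ') :=
    hopf_freeGroup_bool _ (iso.surjective.comp hsurj)
  have hψ'inj : Function.Injective ψ' := by
    intro x y hxy
    exact hΨ (by simp [MonoidHom.comp_apply, hxy])
  rw [hfact]
  exact Subtype.coe_injective.comp hψ'inj

theorem key_free {α : Type} (u v : FreeGroup α) (huv : ¬ Commute u v)
    (l : List (FreeGroup α × Bool)) (hne : l ≠ [])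
    (h1 : ∀ x ∈ l, x.1 ≠ 1)
    (hcu : ∀ x ∈ l, x.2 = true → Commute x.1 u)
    (hcv : ∀ x ∈ l, x.2 = false → Commute x.1 v)
    (hpair : ∀ x ∈ l, ∀ y ∈ l, x.2 = y.2 → Commute x.1 y.1)
    (hch : l.Chain' (fun x y => x.2 ≠ y.2)) :
    (l.map Prod.fst).prod ≠ 1 := by
  classical
  set lu : List (FreeGroup α) := u :: (l.filter (fun x => x.2)).map Prod.fst with hlu
  set lv : List (FreeGroup α) := v :: (l.filter (fun x => !x.2)).map Prod.fst with hlv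
  have hmemu : ∀ z ∈ lu, z = u ∨ ∃ x ∈ l, x.2 = true ∧ x.1 = z := by
    intro z hz
    rcases List.mem_cons.mp hz with rfl | hz
    · exact Or.inl rfl
    · obtain ⟨x, hx, rfl⟩ := List.mem_map.mp hz
      obtain ⟨hxl, hx2⟩ := List.mem_filter.mp hx
      exact Or.inr ⟨x, hxl, by simpa using hx2, rfl⟩
  have hmemv : ∀ z ∈ lv, z = v ∨ ∃ x ∈ l, x.2 = false ∧ x.1 = z := by
    intro z hz
    rcases List.mem_cons.mp hz with rfl | hz
    · exact Or.inl rfl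
    · obtain ⟨x, hx, rfl⟩ := List.mem_map.mp hz
      obtain ⟨hxl, hx2⟩ := List.mem_filter.mp hx
      exact Or.inr ⟨x, hxl, by simpa using hx2, rfl⟩
  have hcommu : ∀ a ∈ lu, ∀ b ∈ lu, Commute a b := by
    intro a ha b hb
    rcases hmemu a ha with rfl | ⟨x, hx, hx2, rfl⟩ <;>
      rcases hmemu b hb with rfl | ⟨y, hy, hy2, rfl⟩
    · exact Commute.refl _
    · exact (hcu y hy hy2).symm
    · exact hcu x hx hx2
    · exact hpair x hx y hy (hx2.trans hy2.symm)
  have hcommv : ∀ a ∈ lv, ∀ b ∈ lv, Commute a b := by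
    intro a ha b hb
    rcases hmemv a ha with rfl | ⟨x, hx, hx2, rfl⟩ <;>
      rcases hmemv b hb with rfl | ⟨y, hy, hy2, rfl⟩
    · exact Commute.refl _
    · exact (hcv y hy hy2).symm
    · exact hcv x hx hx2
    · exact hpair x hx y hy (hx2.trans hy2.symm)
  obtain ⟨pz, hpz⟩ := exists_common_zpower lu hcommu
  obtain ⟨qz, hqz⟩ := exists_common_zpower lv hcommv
  have hu : u ∈ Subgroup.zpowers pz := hpz u (List.mem_cons_self (a := u))
  have hv : v ∈ Subgroup.zpowers qz := hqz v (List.mem_cons_self (a := v))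
  have hpq : ¬ Commute pz qz := by
    intro hc
    obtain ⟨k₁, hk₁⟩ := Subgroup.mem_zpowers_iff.mp hu
    obtain ⟨k₂, hk₂⟩ := Subgroup.mem_zpowers_iff.mp hv
    exact huv (hk₁ ▸ hk₂ ▸ hc.zpow_zpow k₁ k₂)
  have hinj := two_gen_free pz qz hpq
  set ψ := FreeGroup.lift (fun b : Bool => cond b pz qz) with hψ
  have hmemz : ∀ x ∈ l, x.1 ∈ Subgroup.zpowers (cond x.2 pz qz) := by
    intro x hx
    cases hx2 : x.2 with
    | true =>
      refine hpz x.1 (List.mem_cons.mpr (Or.inr ?_))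
      exact List.mem_map.mpr ⟨x, List.mem_filter.mpr ⟨hx, by simp [hx2]⟩, rfl⟩
    | false =>
      refine hqz x.1 (List.mem_cons.mpr (Or.inr ?_))
      exact List.mem_map.mpr ⟨x, List.mem_filter.mpr ⟨hx, by simp [hx2]⟩, rfl⟩
  set e : FreeGroup α × Bool → ℤ := fun x =>
    if hx : ∃ k : ℤ, (cond x.2 pz qz) ^ k = x.1 then hx.choose else 0 with he
  have hspec : ∀ x ∈ l, (cond x.2 pz qz) ^ (e x) = x.1 ∧ e x ≠ 0 := by
    intro x hx
    have hex : ∃ k : ℤ, (cond x.2 pz qz) ^ k = x.1 :=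
      Subgroup.mem_zpowers_iff.mp (hmemz x hx)
    have hval : (cond x.2 pz qz) ^ (e x) = x.1 := by
      rw [he]
      simp only [dif_pos hex]
      exact hex.choose_spec
    refine ⟨hval, ?_⟩
    intro h0
    rw [h0] at hval
    exact h1 x hx (by simpa using hval.symm)
  set l' : List (Bool × ℤ) := l.map (fun x => (x.2, e x)) with hl'
  have hWne : ((l'.map (fun y => (FreeGroup.of y.1) ^ y.2)).prod : FreeGroup Bool) ≠ 1 := by
    apply alt_zpow_ne_one
    · simp only [hl', ne_eq, List.map_eq_nil_iff]
      exact hne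
    · intro y hy
      obtain ⟨x, hx, rfl⟩ := List.mem_map.mp hy
      exact (hspec x hx).2
    · rw [hl']
      unfold List.Chain'
      rw [List.isChain_map]
      exact hch
  have hW : ψ ((l'.map (fun y => (FreeGroup.of y.1) ^ y.2)).prod) = (l.map Prod.fst).prod := by
    rw [map_list_prod]
    rw [hl']
    simp only [List.map_map]
    congr 1
    apply List.map_congr_left
    intro x hx
    simp only [Function.comp_apply]
    rw [map_zpow]
    simp only [hψ, FreeGroup.lift_apply_of]
    exact (hspec x hx).1
  intro hcon
  apply hWne
  apply hinj
  rw [hW, hcon, _root_.map_one]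
theorem alt_prod_ne_one_of_frf {G : Type} [Group G] (hG : FullyResiduallyFree G)
    (A B : Subgroup G)
    (hA : ∀ x ∈ A, ∀ y ∈ A, x * y = y * x)
    (hB : ∀ x ∈ B, ∀ y ∈ B, x * y = y * x)
    {a b : G} (ha : a ∈ A) (hb : b ∈ B) (hab : a * b ≠ b * a)
    (l : List (G × Bool)) (hne : l ≠ [])
    (h1 : ∀ x ∈ l, x.1 ≠ 1)
    (hmem : ∀ x ∈ l, x.1 ∈ (cond x.2 A B))
    (hch : l.Chain' (fun x y => x.2 ≠ y.2)) :
    (l.map Prod.fst).prod ≠ 1 := by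
  classical
  set P : Finset G := (1 :: (a*b) :: (b*a) :: l.map Prod.fst).toFinset with hP
  obtain ⟨α, φ, hφ⟩ := hG P
  have hPmem : ∀ x ∈ l, x.1 ∈ (P : Set G) := by
    intro x hx
    simp only [hP, Finset.coe_insert, List.coe_toFinset, List.mem_cons, Set.mem_setOf_eq]
    exact Or.inr (Or.inr (Or.inr (List.mem_map.mpr ⟨x, hx, rfl⟩)))
  have h1P : (1:G) ∈ (P : Set G) := by simp [hP]
  have habP : a*b ∈ (P : Set G) := by simp [hP]
  have hbaP : b*a ∈ (P : Set G) := by simp [hP]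
  have huv : ¬ Commute (φ a) (φ b) := by
    intro hc
    apply hab
    apply hφ habP hbaP
    rw [_root_.map_mul, _root_.map_mul]
    exact hc.eq
  set l' : List (FreeGroup α × Bool) := l.map (fun x => (φ x.1, x.2)) with hl'
  have hkey := key_free (φ a) (φ b) huv l'
    (by simpa [hl'] using hne)
    (by
      rintro y hy
      obtain ⟨x, hx, rfl⟩ := List.mem_map.mp hy
      simp only
      intro hcon
      exact h1 x hx (hφ.eq_iff (hPmem x hx) h1P |>.mp (by rw [hcon, _root_.map_one]))
    )
    (by
      rintro y hy h2
      obtain ⟨x, hx, rfl⟩ := List.mem_map.mp hy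
      have hxA : x.1 ∈ A := by
        have := hmem x hx
        rwa [show x.2 = true from h2, cond_true] at this
      exact (show Commute x.1 a from hA x.1 hxA a ha).map φ
    )
    (by
      rintro y hy h2
      obtain ⟨x, hx, rfl⟩ := List.mem_map.mp hy
      have hxB : x.1 ∈ B := by
        have := hmem x hx
        rwa [show x.2 = false from h2, cond_false] at this
      exact (show Commute x.1 b from hB x.1 hxB b hb).map φ
    )
    (by
      rintro y hy z hz h2
      obtain ⟨x, hx, rfl⟩ := List.mem_map.mp hy
      obtain ⟨x', hx', rfl⟩ := List.mem_map.mp hz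
      simp only at h2 ⊢
      cases hxb : x.2 with
      | true =>
        have hxA : x.1 ∈ A := by have := hmem x hx; rwa [hxb, cond_true] at this
        have hxA' : x'.1 ∈ A := by
          have := hmem x' hx'; rwa [← h2, hxb, cond_true] at this
        exact (show Commute x.1 x'.1 from hA x.1 hxA x'.1 hxA').map φ
      | false =>
        have hxB : x.1 ∈ B := by have := hmem x hx; rwa [hxb, cond_false] at this
        have hxB' : x'.1 ∈ B := by
          have := hmem x' hx'; rwa [← h2, hxb, cond_false] at this
        exact (show Commute x.1 x'.1 from hB x.1 hxB x'.1 hxB').map φ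
    )
    (by rw [hl']; unfold List.Chain'; rw [List.isChain_map]; exact hch)
  intro hcon
  apply hkey
  have : (l'.map Prod.fst).prod = φ ((l.map Prod.fst).prod) := by
    rw [map_list_prod, hl']
    simp [List.map_map, Function.comp_def]
  rw [this, hcon, _root_.map_one]
def GfamD {G : Type} [Group G] (A B : Subgroup G) : Bool → Type := fun i => cond i (↥A) (↥B)

instance {G : Type} [Group G] (A B : Subgroup G) (i : Bool) : Group (GfamD A B i) :=
  Bool.rec (inferInstance : Group ↥B) (inferInstance : Group ↥A) i

def famD {G : Type} [Group G] (A B : Subgroup G) : ∀ i, GfamD A B i →* G :=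
  fun i => Bool.rec (motive := fun i => GfamD A B i →* G) B.subtype A.subtype i

/-- If `A` and `B` are abelian subgroups of a fully residually free group `G` containing a
pair of non-commuting elements `a ∈ A`, `b ∈ B`, then `⟨A, B⟩ = A ∗ B`: the canonical
homomorphism from the free product `A ∗ B` to `G` is injective with image `A ⊔ B`. -/
theorem abelian_subgroups_free_product (G : Type) [Group G] (hG : FullyResiduallyFree G)
    (A B : Subgroup G)
    (hA : ∀ x ∈ A, ∀ y ∈ A, x * y = y * x)
    (hB : ∀ x ∈ B, ∀ y ∈ B, x * y = y * x)
    (h : ∃ a ∈ A, ∃ b ∈ B, a * b ≠ b * a) :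
    Function.Injective (Monoid.Coprod.lift A.subtype B.subtype) ∧
      (Monoid.Coprod.lift A.subtype B.subtype).range = A ⊔ B := by
  classical
  obtain ⟨a, ha, b, hb, hab⟩ := h
  set Φ : Monoid.Coprod ↥A ↥B →* Monoid.CoprodI (GfamD A B) :=
    Monoid.Coprod.lift
      (Monoid.CoprodI.of : GfamD A B true →* Monoid.CoprodI (GfamD A B))
      (Monoid.CoprodI.of : GfamD A B false →* Monoid.CoprodI (GfamD A B)) with hΦ
  set κ : Monoid.CoprodI (GfamD A B) →* G := Monoid.CoprodI.lift (famD A B) with hκ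
  have hcomp : Monoid.Coprod.lift A.subtype B.subtype = κ.comp Φ := by
    apply Monoid.Coprod.hom_ext
    · rw [Monoid.Coprod.lift_comp_inl, MonoidHom.comp_assoc, hΦ]
      exact (Monoid.CoprodI.lift_comp_of (famD A B) true).symm
    · rw [Monoid.Coprod.lift_comp_inr, MonoidHom.comp_assoc, hΦ]
      exact (Monoid.CoprodI.lift_comp_of (famD A B) false).symm
  have hκinj : Function.Injective κ := by
    rw [← MonoidHom.ker_eq_bot_iff, Subgroup.eq_bot_iff_forall]
    intro g hg
    by_contra hg1
    set w := Monoid.CoprodI.Word.equiv (M := (GfamD A B)) g with hw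
    have hgw : w.prod = g := Monoid.CoprodI.Word.equiv.symm_apply_apply g
    have hwne : w.toList ≠ [] := by
      intro hnil
      apply hg1
      have hwempty : w = Monoid.CoprodI.Word.empty := by
        apply Monoid.CoprodI.Word.ext
        simpa using hnil
      rw [← hgw, hwempty, Monoid.CoprodI.Word.prod_empty]
    set l : List (G × Bool) := w.toList.map (fun x => ((famD A B x.1 x.2 : G), x.1)) with hl
    have hprodeq : (l.map Prod.fst).prod = κ g := by
      rw [← hgw]
      have : w.prod = (w.toList.map (fun x => Monoid.CoprodI.of x.2)).prod := rfl
      rw [this, map_list_prod, hl]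
      simp only [List.map_map]
      congr 1
    apply alt_prod_ne_one_of_frf hG A B hA hB ha hb hab l
    · simpa [hl] using hwne
    · rintro y hy
      obtain ⟨x, hx, rfl⟩ := List.mem_map.mp hy
      have hne1 := w.ne_one x hx
      obtain ⟨i, m⟩ := x
      cases i
      · exact fun hcon => hne1 (OneMemClass.coe_eq_one.mp hcon)
      · exact fun hcon => hne1 (OneMemClass.coe_eq_one.mp hcon)
    · rintro y hy
      obtain ⟨x, hx, rfl⟩ := List.mem_map.mp hy
      obtain ⟨i, m⟩ := x
      cases i
      · exact SetLike.coe_mem m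
      · exact SetLike.coe_mem m
    · rw [hl]
      unfold List.Chain'
      rw [List.isChain_map]
      exact List.IsChain.imp (fun x y hxy => by simpa using hxy) w.chain_ne
    · rw [hprodeq]
      exact MonoidHom.mem_ker.mp hg
  have hΦinj : Function.Injective Φ := by
    set Θ : Monoid.CoprodI (GfamD A B) →* Monoid.Coprod ↥A ↥B :=
      Monoid.CoprodI.lift (fun i => Bool.rec
        (motive := fun i => (GfamD A B) i →* Monoid.Coprod ↥A ↥B)
        Monoid.Coprod.inr Monoid.Coprod.inl i) with hΘ
    have hΘΦ : Θ.comp Φ = MonoidHom.id _ := by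
      apply Monoid.Coprod.hom_ext
      · rw [MonoidHom.comp_assoc, hΦ]
        exact (Monoid.CoprodI.lift_comp_of _ true).trans (MonoidHom.id_comp _).symm
      · rw [MonoidHom.comp_assoc, hΦ]
        exact (Monoid.CoprodI.lift_comp_of _ false).trans (MonoidHom.id_comp _).symm
    intro x y hxy
    have hx := DFunLike.congr_fun hΘΦ x
    have hy := DFunLike.congr_fun hΘΦ y
    simp only [MonoidHom.comp_apply, MonoidHom.id_apply] at hx hy
    rw [← hx, ← hy, hxy]
  constructor
  · rw [hcomp, MonoidHom.coe_comp]
    exact hκinj.comp hΦinj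
  · rw [Monoid.Coprod.range_lift, Subgroup.range_subtype, Subgroup.range_subtype]
end
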